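/- arXiv:2402.03974 — 2 statements merged into one kernel-verified Lean document; each statement's English description precedes it below -/
import Mathlib

section
/- Let (a_n)_{n≥0} be a real-valued general monotone sequence with constants C > 1 and λ > 1, and define the step function f : (0,∞) → ℝ by f(x) = a_n for x ∈ (n, n+1], n ∈ ℕ ∪ {0}. Then f is general monotone (with possibly different constants), and moreover the limit of ∫_0^N f(t) dt as N → ∞ exists if and only if the series ∑_{n=0}^∞ a_n converges. -/
open MeasureTheory Filter Set

/-- `(a_n)` is a general monotone sequence with constants `C` and `l`. -/
def GMSeq (C l : ℝ) (a : ℕ → ℝ) : Prop :=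
  Filter.Tendsto a Filter.atTop (nhds 0) ∧
  ∀ n : ℕ, 1 ≤ n → ∑ k ∈ Finset.Icc n (2*n), |a k - a (k+1)| ≤
    C * ∑ k ∈ Finset.Icc ⌈(n:ℝ)/l⌉₊ ⌊l*(n:ℝ)⌋₊, |a k| / (k:ℝ)

/-- `f : (0,∞) → ℝ` is general monotone with constants `C` and `l`. -/
def GMFun (C l : ℝ) (f : ℝ → ℝ) : Prop :=
  LocallyBoundedVariationOn f (Set.Ioi 0) ∧
  Filter.Tendsto f Filter.atTop (nhds 0) ∧
  ∀ x > (0:ℝ), eVariationOn f (Set.Icc x (2*x)) ≤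
    ENNReal.ofReal (C * ∫ t in Set.Ioo (x/l) (l*x), |f t| / t)

/-- The step function associated to a sequence: `f(x) = a_n` for `x ∈ (n, n+1]`. -/
noncomputable def stepFun (a : ℕ → ℝ) : ℝ → ℝ := fun x => a (⌈x⌉₊ - 1)

lemma stepFun_eq (a : ℕ → ℝ) (n : ℕ) {t : ℝ} (h1 : (n:ℝ) < t) (h2 : t ≤ n+1) :
    stepFun a t = a n := by
  have : ⌈t⌉₊ = n + 1 := by
    rw [Nat.ceil_eq_iff (by omega)]
    constructor
    · simpa using h1
    · exact_mod_cast h2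
  simp [stepFun, this]

lemma stepFun_measurable (a : ℕ → ℝ) : Measurable (stepFun a) :=
  measurable_from_top.comp (Nat.measurable_ceil.sub measurable_const)

lemma stepFun_bound (a : ℕ → ℝ) (b : ℝ) {t : ℝ} (ht : t ∈ Ioc (0:ℝ) b) :
    |stepFun a t| ≤ ∑ k ∈ Finset.range ⌈b⌉₊, |a k| := by
  have h1 : 1 ≤ ⌈t⌉₊ := Nat.one_le_ceil_iff.mpr ht.1
  have h2 : ⌈t⌉₊ ≤ ⌈b⌉₊ := Nat.ceil_le_ceil ht.2
  exact Finset.single_le_sum (f := fun k => |a k|) (fun _ _ => abs_nonneg _)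
    (Finset.mem_range.mpr (by omega))

lemma stepFun_integrableOn (a : ℕ → ℝ) {s : Set ℝ} (hs : MeasurableSet s) {b : ℝ}
    (hsub : s ⊆ Ioc 0 b) : IntegrableOn (stepFun a) s := by
  apply Measure.integrableOn_of_bounded (M := ∑ k ∈ Finset.range ⌈b⌉₊, |a k|)
  · exact ((measure_mono hsub).trans_lt measure_Ioc_lt_top).ne
  · exact (stepFun_measurable a).aestronglyMeasurable
  · exact (ae_restrict_iff' hs).mpr (ae_of_all _ fun t ht =>
      by simpa using stepFun_bound a b (hsub ht))

lemma stepFun_div_integrableOn (a : ℕ → ℝ) {α β : ℝ} (hα : 0 < α) :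
    IntegrableOn (fun t => |stepFun a t| / t) (Ioo α β) := by
  rcases le_or_gt β α with h | h
  · rw [Ioo_eq_empty h.not_gt]; simp [integrableOn_empty]
  apply Measure.integrableOn_of_bounded (M := (∑ k ∈ Finset.range ⌈β⌉₊, |a k|) / α)
  · exact measure_Ioo_lt_top.ne
  · exact (((stepFun_measurable a).abs.div measurable_id).aestronglyMeasurable)
  · refine (ae_restrict_iff' measurableSet_Ioo).mpr (ae_of_all _ fun t ht => ?_)
    have ht0 : 0 < t := hα.trans ht.1
    have hb := stepFun_bound a β ⟨ht0, ht.2.le⟩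
    rw [Real.norm_eq_abs, abs_div, abs_abs, abs_of_pos ht0]
    exact div_le_div₀ (Finset.sum_nonneg fun _ _ => abs_nonneg _) hb hα ht.1.le

lemma sum_edist_le (a : ℕ → ℝ) (m : ℕ → ℕ) (hm : Monotone m) (n : ℕ) :
    ∑ i ∈ Finset.range n, edist (a (m (i+1))) (a (m i)) ≤
    ∑ k ∈ Finset.Ico (m 0) (m n), edist (a k) (a (k+1)) := by
  induction n with
  | zero => simp
  | succ n ih =>
    rw [Finset.sum_range_succ,
      ← Finset.sum_Ico_consecutive _ (hm (Nat.zero_le n)) (hm (Nat.le_succ n))]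
    refine add_le_add ih ?_
    rw [edist_comm]
    exact edist_le_Ico_sum_edist a (hm (Nat.le_succ n))

lemma evar_le (a : ℕ → ℝ) (p q : ℕ) :
    eVariationOn (stepFun a) (Ioc (p:ℝ) q) ≤
      ∑ k ∈ Finset.Ico p (q-1), edist (a k) (a (k+1)) := by
  rw [eVariationOn]
  refine iSup_le ?_
  rintro ⟨n, u, hu, hus⟩
  set m : ℕ → ℕ := fun i => ⌈u i⌉₊ - 1 with hmdef
  have hmono : Monotone m := fun i j hij => Nat.sub_le_sub_right (Nat.ceil_le_ceil (hu hij)) 1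
  have hrange : ∀ i, p ≤ m i ∧ m i ≤ q - 1 := by
    intro i
    have h1 : p < ⌈u i⌉₊ := Nat.lt_ceil.mpr (hus i).1
    have h2 : ⌈u i⌉₊ ≤ q := Nat.ceil_le.mpr (hus i).2
    have h3 : m i = ⌈u i⌉₊ - 1 := rfl
    omega
  calc ∑ i ∈ Finset.range n, edist (stepFun a (u (i+1))) (stepFun a (u i))
      = ∑ i ∈ Finset.range n, edist (a (m (i+1))) (a (m i)) := rfl
    _ ≤ ∑ k ∈ Finset.Ico (m 0) (m n), edist (a k) (a (k+1)) := sum_edist_le a m hmono n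
    _ ≤ ∑ k ∈ Finset.Ico p (q-1), edist (a k) (a (k+1)) :=
        Finset.sum_le_sum_of_subset (Finset.Ico_subset_Ico (hrange 0).1 (by
          have := (hrange n).2; omega))

lemma integral_g_nonneg (a : ℕ → ℝ) {α β : ℝ} (hα : 0 < α) :
    0 ≤ ∫ t in Ioo α β, |stepFun a t| / t := by
  refine setIntegral_nonneg measurableSet_Ioo fun t ht => ?_
  exact div_nonneg (abs_nonneg _) ((hα.trans ht.1).le)

lemma integral_g_ge (a : ℕ → ℝ) {α β : ℝ} (hα : 0 < α) (hβ : α ≤ β) (j : ℕ)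
    (hj : ∀ t ∈ Ioo α β, stepFun a t = a j) :
    |a j| * ((β - α)/β) ≤ ∫ t in Ioo α β, |stepFun a t| / t := by
  have hβ0 : 0 < β := hα.trans_le hβ
  have h1 : ∫ t in Ioo α β, |a j| / β = |a j| * ((β - α)/β) := by
    rw [setIntegral_const]
    simp [Real.volume_Ioo, ENNReal.toReal_ofReal (sub_nonneg.mpr hβ), div_eq_mul_inv]
    rw [max_eq_left (sub_nonneg.mpr hβ)]
    ring
  rw [← h1]
  apply setIntegral_mono_on
  · exact (integrableOn_const_iff (C := |a j| / β)).mpr (Or.inr measure_Ioo_lt_top)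
  · exact stepFun_div_integrableOn a hα
  · exact measurableSet_Ioo
  · intro t ht
    rw [hj t ht]
    exact div_le_div_of_nonneg_left (abs_nonneg _) (hα.trans ht.1) ht.2.le

lemma sum_integral_le (a : ℕ → ℝ) {α β : ℝ} (hα : 0 < α) (K : Finset ℕ)
    (hK : ∀ k ∈ K, α ≤ (k:ℝ) ∧ (k:ℝ)+1 ≤ β) :
    ∑ k ∈ K, ∫ t in Ioo (k:ℝ) (k+1), |stepFun a t| / t ≤
      ∫ t in Ioo α β, |stepFun a t| / t := by
  have hsub : ∀ k ∈ K, Ioo (k:ℝ) (k+1) ⊆ Ioo α β := fun k hk =>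
    Ioo_subset_Ioo (hK k hk).1 (hK k hk).2
  rw [← integral_biUnion_finset K (fun _ _ => measurableSet_Ioo) ?disj
    (fun k hk => (stepFun_div_integrableOn a hα).mono_set (hsub k hk))]
  case disj =>
    intro i _ j _ hij
    simp only [Function.onFun]
    rw [Set.disjoint_left]
    rintro t ⟨h1, h2⟩ ⟨h3, h4⟩
    have a1 : i < j+1 := by exact_mod_cast h1.trans h4
    have a2 : j < i+1 := by exact_mod_cast h3.trans h2
    omega
  · apply setIntegral_mono_set (stepFun_div_integrableOn a hα)
    · exact (ae_restrict_iff' measurableSet_Ioo).mpr (ae_of_all _ fun t ht =>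
        div_nonneg (abs_nonneg _) ((hα.trans ht.1).le))
    · exact (HasSubset.Subset.eventuallyLE (by
        simpa using fun k hk => hsub k hk))

lemma two_integral_le (a : ℕ → ℝ) {A B α β γ δ : ℝ} (hA : 0 < A) (h1 : A ≤ α)
    (h2 : α ≤ β) (h3 : β ≤ γ) (h4 : γ ≤ δ) (h5 : δ ≤ B) :
    (∫ t in Ioo α β, |stepFun a t| / t) + (∫ t in Ioo γ δ, |stepFun a t| / t) ≤
      ∫ t in Ioo A B, |stepFun a t| / t := by
  have hsub1 : Ioo α β ⊆ Ioo A B := Ioo_subset_Ioo h1 ((h3.trans h4).trans h5)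
  have hsub2 : Ioo γ δ ⊆ Ioo A B := Ioo_subset_Ioo (h1.trans (h2.trans h3)) h5
  have hdisj : Disjoint (Ioo α β) (Ioo γ δ) := by
    rw [Set.disjoint_left]
    rintro t ⟨_, hb⟩ ⟨hc, _⟩
    exact absurd (hb.trans_le h3) hc.asymm
  rw [← setIntegral_union hdisj measurableSet_Ioo
    ((stepFun_div_integrableOn a hA).mono_set hsub1)
    ((stepFun_div_integrableOn a hA).mono_set hsub2)]
  apply setIntegral_mono_set (stepFun_div_integrableOn a hA)
  · exact (ae_restrict_iff' measurableSet_Ioo).mpr (ae_of_all _ fun t ht =>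
      div_nonneg (abs_nonneg _) ((hA.trans ht.1).le))
  · exact HasSubset.Subset.eventuallyLE (union_subset hsub1 hsub2)

lemma stepFun_intervalIntegrable (a : ℕ → ℝ) {c d : ℝ} (hc : 0 ≤ c) (hd : 0 ≤ d) :
    IntervalIntegrable (stepFun a) volume c d := by
  rw [intervalIntegrable_iff]
  refine stepFun_integrableOn a measurableSet_uIoc (b := max c d) ?_
  rw [Set.uIoc]
  exact Ioc_subset_Ioc_left (le_min hc hd)

lemma integral_step_consec (a : ℕ → ℝ) (n : ℕ) {N : ℝ} (h1 : (n:ℝ) ≤ N) (h2 : N ≤ n+1) :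
    ∫ t in (n:ℝ)..N, stepFun a t = (N - n) * a n := by
  rw [intervalIntegral.integral_of_le h1,
    setIntegral_congr_fun measurableSet_Ioc (fun t ht => stepFun_eq a n ht.1 (ht.2.trans h2)),
    setIntegral_const, Real.volume_real_Ioc_of_le h1, smul_eq_mul]

lemma integral_step_nat (a : ℕ → ℝ) (n : ℕ) :
    ∫ t in (0:ℝ)..(n:ℝ), stepFun a t = ∑ k ∈ Finset.range n, a k := by
  induction n with
  | zero => simp
  | succ n ih =>
    have h1 : IntervalIntegrable (stepFun a) volume 0 n :=
      stepFun_intervalIntegrable a le_rfl (Nat.cast_nonneg n)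
    have h2 : IntervalIntegrable (stepFun a) volume (n:ℝ) ((n:ℝ)+1) :=
      stepFun_intervalIntegrable a (Nat.cast_nonneg n) (by positivity)
    have : ((n+1:ℕ):ℝ) = (n:ℝ)+1 := by push_cast; ring
    rw [this, ← intervalIntegral.integral_add_adjacent_intervals h1 h2, ih,
      integral_step_consec a n (N := (n:ℝ)+1) (by linarith) (by linarith), Finset.sum_range_succ]
    ring

lemma integral_step_real (a : ℕ → ℝ) {N : ℝ} (hN : 0 ≤ N) :
    ∫ t in (0:ℝ)..N, stepFun a t
      = (∑ k ∈ Finset.range ⌊N⌋₊, a k) + (N - ⌊N⌋₊) * a ⌊N⌋₊ := by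
  have h1 : (⌊N⌋₊:ℝ) ≤ N := Nat.floor_le hN
  have h2 : N ≤ (⌊N⌋₊:ℝ) + 1 := (Nat.lt_floor_add_one N).le
  rw [← intervalIntegral.integral_add_adjacent_intervals
      (stepFun_intervalIntegrable a le_rfl (Nat.cast_nonneg _))
      (stepFun_intervalIntegrable a (Nat.cast_nonneg _) hN),
    integral_step_nat, integral_step_consec a ⌊N⌋₊ h1 h2]

set_option maxHeartbeats 2000000 in
/-- If `(a_n)` is a real-valued general monotone sequence, then the step function
`f(x) = a_n` for `x ∈ (n, n+1]` is a general monotone function (with possibly different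
constants), and `∫_0^∞ f(t) dt` converges if and only if `∑ a_n` converges. -/
theorem stepFun_GM_and_integral_iff_sum (a : ℕ → ℝ) (C l : ℝ) (hC : 1 < C) (hl : 1 < l)
    (hGM : GMSeq C l a) :
    (∃ C' : ℝ, 1 < C' ∧ ∃ ν : ℕ, 1 ≤ ν ∧ GMFun C' (2^ν) (stepFun a)) ∧
    ((∃ I : ℝ, Tendsto (fun N : ℝ => ∫ t in (0:ℝ)..N, stepFun a t) atTop (nhds I)) ↔
     (∃ S : ℝ, Tendsto (fun N : ℕ => ∑ n ∈ Finset.range N, a n) atTop (nhds S))) := by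
  obtain ⟨ha0, hGM2⟩ := hGM
  constructor
  · -- GM part
    set ν : ℕ := ⌈l⌉₊ + 2 with hν
    set L : ℝ := 2^ν with hLdef
    have hl0 : 0 < l := by linarith
    have hL4 : 4*l ≤ L := by
      have c1 : l ≤ (⌈l⌉₊:ℝ) := Nat.le_ceil l
      have c2 : (⌈l⌉₊:ℝ) ≤ 2^(⌈l⌉₊:ℕ) := by
        exact_mod_cast (Nat.lt_two_pow_self (n := ⌈l⌉₊)).le
      have c3 : L = 4 * 2^(⌈l⌉₊:ℕ) := by rw [hLdef, hν, pow_add]; ring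
      rw [c3]; nlinarith
    have hL4' : (4:ℝ) ≤ L := by linarith
    have hL0 : (0:ℝ) < L := by linarith
    refine ⟨2*C+2, by linarith, ν, by omega, ?_, ?_, ?_⟩
    · -- LocallyBoundedVariationOn
      intro x y hx hy
      have hsub : Ioi 0 ∩ Icc x y ⊆ Ioc ((0:ℕ):ℝ) ((⌈y⌉₊:ℕ):ℝ) := by
        intro t ht
        exact ⟨by exact_mod_cast ht.1, ht.2.2.trans (Nat.le_ceil y)⟩
      refine ne_top_of_le_ne_top ?_ ((eVariationOn.mono _ hsub).trans (evar_le a 0 ⌈y⌉₊))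
      exact (ENNReal.sum_lt_top.mpr fun _ _ => edist_lt_top _ _).ne
    · -- Tendsto atTop 0
      have h1 : Tendsto (fun n : ℕ => n - 1) atTop atTop := tendsto_sub_atTop_nat 1
      exact ha0.comp (h1.comp tendsto_nat_ceil_atTop)
    · -- variation bound
      intro x hx
      set I := ∫ t in Ioo (x/L) (L*x), |stepFun a t| / t with hI
      have hxL : 0 < x / L := by positivity
      have hI0 : 0 ≤ I := integral_g_nonneg a hxL
      have hCI : (0:ℝ) ≤ (2*C+2) * I := by nlinarith
      clear_value L
      rcases le_or_gt (2*x) 1 with hsm | hbig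
      · -- tiny x : variation is zero
        have hsub : Icc x (2*x) ⊆ Ioc ((0:ℕ):ℝ) ((1:ℕ):ℝ) := by
          intro t ht
          refine ⟨by simpa using hx.trans_le ht.1, ?_⟩
          simpa using ht.2.trans hsm
        refine le_trans ((eVariationOn.mono _ hsub).trans (evar_le a 0 1)) ?_
        simp
      rcases le_or_gt x 1 with hx1 | hx1
      · -- medium x : x ∈ (1/2, 1]
        have hq2 : ⌈2*x⌉₊ ≤ 2 := Nat.ceil_le.mpr (by push_cast; linarith)
        have hsub : Icc x (2*x) ⊆ Ioc ((0:ℕ):ℝ) ((⌈2*x⌉₊:ℕ):ℝ) := by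
          intro t ht
          exact ⟨by simpa using hx.trans_le ht.1, ht.2.trans (Nat.le_ceil _)⟩
        have step1 : eVariationOn (stepFun a) (Icc x (2*x)) ≤
            ∑ k ∈ Finset.Ico 0 1, edist (a k) (a (k+1)) := by
          refine le_trans ((eVariationOn.mono _ hsub).trans (evar_le a 0 ⌈2*x⌉₊)) ?_
          exact Finset.sum_le_sum_of_subset (Finset.Ico_subset_Ico le_rfl (by omega))
        have step2 : ∑ k ∈ Finset.Ico 0 1, edist (a k) (a (k+1)) =
            ENNReal.ofReal |a 0 - a 1| := by
          simp [edist_dist, Real.dist_eq]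
        -- integral lower bounds
        have hI1 : |a 0| * ((x - x/2)/x) ≤ ∫ t in Ioo (x/2) x, |stepFun a t| / t := by
          refine integral_g_ge a (by linarith) (by linarith) 0 fun t ht => ?_
          obtain ⟨ht1, ht2⟩ := ht
          exact stepFun_eq a 0 (by simpa using (by linarith : (0:ℝ) < t))
            (by push_cast; linarith)
        have hI2 : |a 1| * ((2 - 1)/2) ≤ ∫ t in Ioo (1:ℝ) 2, |stepFun a t| / t := by
          refine integral_g_ge a one_pos (by norm_num) 1 fun t ht => ?_
          obtain ⟨ht1, ht2⟩ := ht
          exact stepFun_eq a 1 (by exact_mod_cast ht1) (by push_cast; linarith)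
        have hsum : (∫ t in Ioo (x/2) x, |stepFun a t| / t) +
            (∫ t in Ioo (1:ℝ) 2, |stepFun a t| / t) ≤ I := by
          refine two_integral_le a hxL ?_ (by linarith) hx1 (by norm_num) ?_
          · rw [div_le_div_iff₀ hL0 (by norm_num)]; nlinarith
          · nlinarith
        have hx2 : (x - x/2)/x = 1/2 := by field_simp; ring
        refine le_trans (step1.trans_eq step2) (ENNReal.ofReal_le_ofReal ?_)
        have e1 : |a 0 - a 1| ≤ |a 0| + |a 1| := abs_sub _ _
        rw [hx2] at hI1
        nlinarith [abs_nonneg (a 0), abs_nonneg (a 1)]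
      · -- large x : x > 1
        set m : ℕ := ⌈x⌉₊ - 1 with hmdef
        have hceil2 : 2 ≤ ⌈x⌉₊ := by
          have : 1 < ⌈x⌉₊ := Nat.lt_ceil.mpr (by exact_mod_cast hx1)
          omega
        have hm1 : 1 ≤ m := by omega
        have hmcast : (m:ℝ) = (⌈x⌉₊:ℝ) - 1 := by
          have : (⌈x⌉₊ - 1 : ℕ) = m := rfl
          push_cast [hmdef, Nat.cast_sub (by omega : 1 ≤ ⌈x⌉₊)]
          ring
        have hmx : (m:ℝ) < x := by
          rw [hmcast]
          have := Nat.ceil_lt_add_one (by positivity : (0:ℝ) ≤ x)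
          linarith
        have hxm : x ≤ (m:ℝ) + 1 := by
          rw [hmcast]
          have := Nat.le_ceil x
          linarith
        have hm1r : (1:ℝ) ≤ m := by exact_mod_cast hm1
        set q : ℕ := ⌈2*x⌉₊ with hqdef
        have hq : q ≤ 2*m + 2 := by
          refine Nat.ceil_le.mpr ?_
          push_cast
          linarith
        have hsub : Icc x (2*x) ⊆ Ioc ((m:ℕ):ℝ) ((q:ℕ):ℝ) := by
          intro t ht
          exact ⟨hmx.trans_le ht.1, ht.2.trans (Nat.le_ceil _)⟩
        have step1 : eVariationOn (stepFun a) (Icc x (2*x)) ≤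
            ∑ k ∈ Finset.Icc m (2*m), edist (a k) (a (k+1)) := by
          refine le_trans ((eVariationOn.mono _ hsub).trans (evar_le a m q)) ?_
          refine Finset.sum_le_sum_of_subset fun k hk => ?_
          simp only [Finset.mem_Ico, Finset.mem_Icc] at *
          omega
        have step2 : ∑ k ∈ Finset.Icc m (2*m), edist (a k) (a (k+1)) =
            ENNReal.ofReal (∑ k ∈ Finset.Icc m (2*m), |a k - a (k+1)|) := by
          rw [ENNReal.ofReal_sum_of_nonneg fun _ _ => abs_nonneg _]
          refine Finset.sum_congr rfl fun k _ => ?_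
          rw [edist_dist, Real.dist_eq]
        have step3 := hGM2 m hm1
        set K1 : ℕ := ⌈(m:ℝ)/l⌉₊ with hK1def
        set K2 : ℕ := ⌊l*(m:ℝ)⌋₊ with hK2def
        have hK11 : 1 ≤ K1 := Nat.one_le_ceil_iff.mpr (by positivity)
        have hK1m : (m:ℝ)/l ≤ (K1:ℝ) := Nat.le_ceil _
        have hK2m : (K2:ℝ) ≤ l*(m:ℝ) := Nat.floor_le (by positivity)
        clear_value m q K1 K2 I
        -- each term of the discrete sum is bounded by twice an integral
        have key : ∀ k ∈ Finset.Icc K1 K2,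
            |a k| / (k:ℝ) ≤ 2 * ∫ t in Ioo (k:ℝ) (k+1), |stepFun a t| / t := by
          intro k hk
          simp only [Finset.mem_Icc] at hk
          have hk1 : 1 ≤ k := le_trans hK11 hk.1
          have hk1r : (1:ℝ) ≤ k := by exact_mod_cast hk1
          have hkpos : (0:ℝ) < k := by linarith
          have hint : |a k| * (((k:ℝ)+1 - k)/((k:ℝ)+1)) ≤
              ∫ t in Ioo (k:ℝ) (k+1), |stepFun a t| / t := by
            refine integral_g_ge a hkpos (by linarith) k fun t ht => ?_
            exact stepFun_eq a k ht.1 ht.2.le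
          have heq : 2 * (|a k| * (((k:ℝ)+1 - k)/((k:ℝ)+1))) = 2*|a k| / ((k:ℝ)+1) := by
            field_simp
            ring
          have : |a k| / (k:ℝ) ≤ 2 * (|a k| * (((k:ℝ)+1 - k)/((k:ℝ)+1))) := by
            rw [heq, div_le_div_iff₀ hkpos (by linarith : (0:ℝ) < (k:ℝ)+1)]
            nlinarith [abs_nonneg (a k)]
          linarith
        have hKsub : ∀ k ∈ Finset.Icc K1 K2, x/L ≤ (k:ℝ) ∧ (k:ℝ)+1 ≤ L*x := by
          intro k hk
          simp only [Finset.mem_Icc] at hk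
          have hk1r : (1:ℝ) ≤ k := by exact_mod_cast le_trans hK11 hk.1
          have hc1 : (m:ℝ)/l ≤ k := le_trans hK1m (by exact_mod_cast hk.1)
          have hc2 : (k:ℝ) ≤ l*m := le_trans (by exact_mod_cast hk.2 : (k:ℝ) ≤ K2) hK2m
          have hml : (m:ℝ) ≤ l * k := by
            rw [div_le_iff₀ hl0] at hc1; linarith
          constructor
          · rw [div_le_iff₀ hL0]
            nlinarith
          · nlinarith
        have step4 : ∑ k ∈ Finset.Icc K1 K2, |a k| / (k:ℝ) ≤ 2 * I := by
          calc ∑ k ∈ Finset.Icc K1 K2, |a k| / (k:ℝ)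
              ≤ ∑ k ∈ Finset.Icc K1 K2, 2 * ∫ t in Ioo (k:ℝ) (k+1), |stepFun a t| / t :=
                Finset.sum_le_sum key
            _ = 2 * ∑ k ∈ Finset.Icc K1 K2, ∫ t in Ioo (k:ℝ) (k+1), |stepFun a t| / t := by
                rw [Finset.mul_sum]
            _ ≤ 2 * I := by
                have := sum_integral_le a hxL (Finset.Icc K1 K2) hKsub
                linarith
        refine le_trans (step1.trans_eq step2) (ENNReal.ofReal_le_ofReal ?_)
        nlinarith
  · -- integral converges iff sum converges
    constructor
    · rintro ⟨Iv, hIv⟩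
      refine ⟨Iv, ?_⟩
      have h1 := hIv.comp (tendsto_natCast_atTop_atTop (R := ℝ))
      refine h1.congr fun n => ?_
      exact integral_step_nat a n
    · rintro ⟨S, hS⟩
      refine ⟨S, ?_⟩
      have hfl : Tendsto (fun N : ℝ => ⌊N⌋₊) atTop atTop := tendsto_nat_floor_atTop
      have h1 : Tendsto (fun N : ℝ => ∑ k ∈ Finset.range ⌊N⌋₊, a k) atTop (nhds S) :=
        hS.comp hfl
      have h2 : Tendsto (fun N : ℝ => (N - (⌊N⌋₊:ℝ)) * a ⌊N⌋₊) atTop (nhds 0) := by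
        have hg : Tendsto (fun N : ℝ => |a ⌊N⌋₊|) atTop (nhds 0) := by
          have := (ha0.comp hfl).abs
          simpa using this
        refine squeeze_zero_norm' ?_ hg
        filter_upwards [eventually_ge_atTop (0:ℝ)] with N hN
        have hfl1 : (⌊N⌋₊:ℝ) ≤ N := Nat.floor_le hN
        have hfl2 : N < (⌊N⌋₊:ℝ) + 1 := Nat.lt_floor_add_one N
        rw [Real.norm_eq_abs, abs_mul]
        have : |N - (⌊N⌋₊:ℝ)| ≤ 1 := by rw [abs_of_nonneg (by linarith)]; linarith
        nlinarith [abs_nonneg (a ⌊N⌋₊), abs_nonneg (N - (⌊N⌋₊:ℝ))]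
      have h3 := h1.add h2
      rw [add_zero] at h3
      refine h3.congr' ?_
      filter_upwards [eventually_ge_atTop (0:ℝ)] with N hN
      exact (integral_step_real a hN).symm
end

section
/- The series ∑_{n=1}^∞ (−1)^n cos((2n−1)x)/(2n−1) converges for every x ∈ ℝ and its sum function is bounded on ℝ, but the partial sums x ↦ ∑_{n=1}^N (−1)^n cos((2n−1)x)/(2n−1) do not converge uniformly on ℝ as N → ∞. Consequently, boundedness of the sum of a cosine series does not imply uniform convergence of its partial sums. -/
open Filter Real
open scoped Topology

noncomputable def Sco (N : ℕ) (x : ℝ) : ℝ :=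
  ∑ n ∈ Finset.Icc 1 N, (-1:ℝ)^n * Real.cos ((2*(n:ℝ)-1)*x) / (2*(n:ℝ)-1)

noncomputable def gfun (x : ℝ) : ℝ := -(Real.pi/4) * Real.sign (Real.cos x)

lemma sin_sum_id (N : ℕ) (t : ℝ) :
    (∑ n ∈ Finset.Icc 1 N, (-1:ℝ)^n * Real.sin ((2*(n:ℝ)-1)*t)) * (2 * Real.cos t)
      = (-1:ℝ)^N * Real.sin (2*(N:ℝ)*t) := by
  induction N with
  | zero => simp
  | succ N ih =>
    have key : ∀ a b : ℝ, Real.sin a * (2 * Real.cos b) = Real.sin (a+b) + Real.sin (a-b) := by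
      intro a b; rw [Real.sin_add, Real.sin_sub]; ring
    rw [Finset.sum_Icc_succ_top (by omega)]
    push_cast at ih ⊢
    have e1 : (2*((N:ℝ)+1)-1)*t + t = 2*((N:ℝ)+1)*t := by ring
    have e2 : (2*((N:ℝ)+1)-1)*t - t = 2*(N:ℝ)*t := by ring
    have hterm : Real.sin ((2*((N:ℝ)+1)-1)*t) * (2*Real.cos t)
        = Real.sin (2*((N:ℝ)+1)*t) + Real.sin (2*(N:ℝ)*t) := by
      rw [key, e1, e2]
    linear_combination ih + (-1:ℝ)^(N+1) * hterm

lemma hasDerivAt_Sco (N : ℕ) (t : ℝ) :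
    HasDerivAt (fun x => Sco N x)
      (-(∑ n ∈ Finset.Icc 1 N, (-1:ℝ)^n * Real.sin ((2*(n:ℝ)-1)*t))) t := by
  rw [← Finset.sum_neg_distrib]
  apply HasDerivAt.fun_sum
  intro n hn
  have h1 : (1:ℕ) ≤ n := (Finset.mem_Icc.mp hn).1
  have hne : (2*(n:ℝ)-1) ≠ 0 := by
    have : (1:ℝ) ≤ (n:ℝ) := by exact_mod_cast h1
    nlinarith
  have hlin : HasDerivAt (fun x : ℝ => (2*(n:ℝ)-1)*x) (2*(n:ℝ)-1) t := by
    simpa using (hasDerivAt_id t).const_mul (2*(n:ℝ)-1)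
  have hcos := hlin.cos
  have h2 := (hcos.const_mul ((-1:ℝ)^n)).div_const (2*(n:ℝ)-1)
  refine h2.congr_deriv ?_
  field_simp

lemma Sco_zero_tendsto : Tendsto (fun N => Sco N 0) atTop (𝓝 (-(Real.pi/4))) := by
  have heq : ∀ N, Sco N 0 = -(∑ i ∈ Finset.range N, (-1:ℝ)^i / (2*(i:ℝ)+1)) := by
    intro N
    unfold Sco
    rw [← Finset.Ico_add_one_right_eq_Icc, Finset.sum_Ico_eq_sum_range]
    rw [← Finset.sum_neg_distrib]
    apply Finset.sum_congr rfl
    intro i _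
    push_cast
    rw [mul_zero, Real.cos_zero, pow_add]
    have h1 : (0:ℝ) < 2*(i:ℝ)+1 := by positivity
    have : 2*((1:ℝ)+i)-1 = 2*(i:ℝ)+1 := by ring
    rw [this]
    field_simp
  simp only [heq]
  exact (Real.tendsto_sum_pi_div_four).neg

lemma Sco_even (N : ℕ) (x : ℝ) : Sco N (-x) = Sco N x := by
  unfold Sco
  apply Finset.sum_congr rfl
  intro n _
  rw [mul_neg, Real.cos_neg]

lemma Sco_antiperiod (N : ℕ) (x : ℝ) : Sco N (x + Real.pi) = -Sco N x := by
  unfold Sco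
  rw [← Finset.sum_neg_distrib]
  apply Finset.sum_congr rfl
  intro n hn
  have h1 : (1:ℕ) ≤ n := (Finset.mem_Icc.mp hn).1
  have harg : (2*(n:ℝ)-1)*(x+Real.pi)
      = ((2*(n:ℝ)-1)*x + Real.pi) + ((n-1:ℕ):ℝ) * (2*Real.pi) := by
    push_cast [h1]
    ring
  rw [harg, Real.cos_add_nat_mul_two_pi, Real.cos_add_pi]
  ring

lemma gfun_antiperiod (x : ℝ) : gfun (x + Real.pi) = -gfun x := by
  unfold gfun
  rw [Real.cos_add_pi, Real.sign_neg]
  ring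

lemma Sco_cos_zero (N : ℕ) (x : ℝ) (hx : Real.cos x = 0) : Sco N x = 0 := by
  obtain ⟨k, hk⟩ := Real.cos_eq_zero_iff.mp hx
  unfold Sco
  apply Finset.sum_eq_zero
  intro n hn
  have h1 : (1:ℕ) ≤ n := (Finset.mem_Icc.mp hn).1
  have : Real.cos ((2*(n:ℝ)-1)*x) = 0 := by
    apply Real.cos_eq_zero_iff.mpr
    refine ⟨(2*(n:ℤ)-1)*k + (n:ℤ) - 1, ?_⟩
    rw [hk]
    push_cast
    ring
  rw [this]
  ring

lemma Sco_sub_zero (N : ℕ) (x : ℝ) :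
    Sco N x - Sco N 0 = ∫ t in (0:ℝ)..x,
      -(∑ n ∈ Finset.Icc 1 N, (-1:ℝ)^n * Real.sin ((2*(n:ℝ)-1)*t)) := by
  refine (intervalIntegral.integral_eq_sub_of_hasDerivAt (fun t _ => hasDerivAt_Sco N t) ?_).symm
  apply Continuous.intervalIntegrable
  apply Continuous.neg
  apply continuous_finset_sum
  intro n _
  exact continuous_const.mul (Real.continuous_sin.comp (continuous_const.mul continuous_id))

lemma Sco_core {x : ℝ} (hx0 : 0 ≤ x) (hx : x < Real.pi/2) :
    Tendsto (fun N => Sco N x) atTop (𝓝 (-(Real.pi/4))) := by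
  have hpi := Real.pi_pos
  set c := Real.cos x with hc
  have hcpos : 0 < c := Real.cos_pos_of_mem_Ioo ⟨by linarith, hx⟩
  have hcost : ∀ t ∈ Set.Icc (0:ℝ) x, c ≤ Real.cos t := fun t ht =>
    Real.cos_le_cos_of_nonneg_of_le_pi ht.1 (by linarith) ht.2
  set I : ℕ → ℝ := fun N => ∫ t in (0:ℝ)..x, (2*Real.cos t)⁻¹ * Real.sin (2*(N:ℝ)*t) with hI
  -- representation
  have hrw : ∀ N : ℕ, Sco N x = Sco N 0 + (-((-1:ℝ)^N)) * I N := by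
    intro N
    have h0 := Sco_sub_zero N x
    have h1 : (∫ t in (0:ℝ)..x,
        -(∑ n ∈ Finset.Icc 1 N, (-1:ℝ)^n * Real.sin ((2*(n:ℝ)-1)*t)))
        = ∫ t in (0:ℝ)..x, (-((-1:ℝ)^N)) * ((2*Real.cos t)⁻¹ * Real.sin (2*(N:ℝ)*t)) := by
      apply intervalIntegral.integral_congr
      intro t ht
      rw [Set.uIcc_of_le hx0] at ht
      show -(∑ n ∈ Finset.Icc 1 N, (-1:ℝ)^n * Real.sin ((2*(n:ℝ)-1)*t))
          = (-((-1:ℝ)^N)) * ((2*Real.cos t)⁻¹ * Real.sin (2*(N:ℝ)*t))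
      have hct : 0 < Real.cos t := lt_of_lt_of_le hcpos (hcost t ht)
      have hs := sin_sum_id N t
      have h2 : (2*Real.cos t) ≠ 0 := by positivity
      have h3 : (∑ n ∈ Finset.Icc 1 N, (-1:ℝ)^n * Real.sin ((2*(n:ℝ)-1)*t))
          = (-1:ℝ)^N * Real.sin (2*(N:ℝ)*t) / (2*Real.cos t) := by
        rw [eq_div_iff h2]; exact hs
      rw [h3]
      ring
    rw [h1, intervalIntegral.integral_const_mul] at h0
    have hIN : I N = ∫ t in (0:ℝ)..x, (2*Real.cos t)⁻¹ * Real.sin (2*(N:ℝ)*t) := rfl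
    rw [hIN]
    linarith
  set C : ℝ := ((2*c)⁻¹ + (2*c)⁻¹ + 2*(4*c^2)⁻¹ * x) * 2⁻¹ with hCdef
  -- bound on I N
  have hIbound : ∀ N : ℕ, 1 ≤ N → |I N| ≤ C / N := by
    intro N hN
    have hNpos : (0:ℝ) < N := by exact_mod_cast hN
    set u : ℝ → ℝ := fun t => (2*Real.cos t)⁻¹ with hu
    set u' : ℝ → ℝ := fun t => 2*Real.sin t * ((2*Real.cos t)^2)⁻¹ with hu'
    set v : ℝ → ℝ := fun t => -(Real.cos (2*(N:ℝ)*t)) / (2*(N:ℝ)) with hv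
    set v' : ℝ → ℝ := fun t => Real.sin (2*(N:ℝ)*t) with hv'
    have hcos_ne : ∀ t ∈ Set.uIcc (0:ℝ) x, Real.cos t ≠ 0 := by
      intro t ht
      rw [Set.uIcc_of_le hx0] at ht
      have := lt_of_lt_of_le hcpos (hcost t ht)
      positivity
    have huderiv : ∀ t ∈ Set.uIcc (0:ℝ) x, HasDerivAt u (u' t) t := by
      intro t ht
      have h2 : (2*Real.cos t) ≠ 0 := by
        have := hcos_ne t ht; intro h; apply this; linarith
      have hbase : HasDerivAt (fun s : ℝ => 2*Real.cos s) (-(2*Real.sin t)) t := by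
        simpa [mul_comm] using (Real.hasDerivAt_cos t).const_mul (2:ℝ)
      have := hbase.inv h2
      refine this.congr_deriv ?_
      simp only [hu']
      field_simp
    have hvderiv : ∀ t ∈ Set.uIcc (0:ℝ) x, HasDerivAt v (v' t) t := by
      intro t _
      have hlin : HasDerivAt (fun s : ℝ => 2*(N:ℝ)*s) (2*(N:ℝ)) t := by
        simpa using (hasDerivAt_id t).const_mul (2*(N:ℝ))
      have := (hlin.cos.neg).div_const (2*(N:ℝ))
      refine this.congr_deriv ?_
      simp only [hv']
      field_simp
    have hu'int : IntervalIntegrable u' MeasureTheory.volume 0 x := by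
      apply ContinuousOn.intervalIntegrable
      apply ContinuousOn.mul (Continuous.continuousOn (by fun_prop))
      apply ContinuousOn.inv₀ (Continuous.continuousOn (by fun_prop))
      intro t ht
      have h2 := hcos_ne t ht
      positivity
    have hv'int : IntervalIntegrable v' MeasureTheory.volume 0 x :=
      Continuous.intervalIntegrable (by fun_prop) 0 x
    have hibp := intervalIntegral.integral_mul_deriv_eq_deriv_mul huderiv hvderiv hu'int hv'int
    have hIN : I N = u x * v x - u 0 * v 0 - ∫ t in (0:ℝ)..x, u' t * v t := hibp
    -- bounds
    have hvb : ∀ t : ℝ, |v t| ≤ (2*(N:ℝ))⁻¹ := by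
      intro t
      simp only [hv]
      rw [abs_div, abs_neg, abs_of_pos (by positivity : (0:ℝ) < 2*(N:ℝ)), ← one_div]
      gcongr
      exact Real.abs_cos_le_one _
    have hub : ∀ t ∈ Set.Icc (0:ℝ) x, |u t| ≤ (2*c)⁻¹ := by
      intro t ht
      simp only [hu]
      have h1 : 0 < Real.cos t := lt_of_lt_of_le hcpos (hcost t ht)
      rw [abs_of_pos (by positivity)]
      have h3 : (0:ℝ) < 2*c := by positivity
      have h4 : 2*c ≤ 2*Real.cos t := by linarith [hcost t ht]
      exact inv_anti₀ h3 h4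
    have hu'b : ∀ t ∈ Set.Icc (0:ℝ) x, |u' t| ≤ 2*(4*c^2)⁻¹ := by
      intro t ht
      simp only [hu']
      have h1 : 0 < Real.cos t := lt_of_lt_of_le hcpos (hcost t ht)
      have hsq : 4*c^2 ≤ (2*Real.cos t)^2 := by nlinarith [hcost t ht]
      rw [abs_mul]
      have e1 : |2*Real.sin t| ≤ 2 := by
        rw [abs_mul, abs_two]
        have : |Real.sin t| ≤ 1 := abs_le.mpr ⟨Real.neg_one_le_sin t, Real.sin_le_one t⟩
        linarith
      have e2 : |((2*Real.cos t)^2)⁻¹| ≤ (4*c^2)⁻¹ := by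
        rw [abs_of_pos (by positivity)]
        exact inv_anti₀ (by positivity) hsq
      exact mul_le_mul e1 e2 (abs_nonneg _) (by norm_num)
    have hint : ‖∫ t in (0:ℝ)..x, u' t * v t‖ ≤ (2*(4*c^2)⁻¹ * (2*(N:ℝ))⁻¹) * |x - 0| := by
      apply intervalIntegral.norm_integral_le_of_norm_le_const
      intro t ht
      have ht' : t ∈ Set.Icc (0:ℝ) x := by
        rw [Set.uIoc_of_le hx0] at ht
        exact ⟨le_of_lt ht.1, ht.2⟩
      calc ‖u' t * v t‖ = |u' t| * |v t| := abs_mul _ _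
        _ ≤ (2*(4*c^2)⁻¹) * (2*(N:ℝ))⁻¹ :=
            mul_le_mul (hu'b t ht') (hvb t) (abs_nonneg _) (by positivity)
    have hb1 : |u x * v x| ≤ (2*c)⁻¹ * (2*(N:ℝ))⁻¹ := by
      rw [abs_mul]
      exact mul_le_mul (hub x ⟨hx0, le_refl x⟩) (hvb x) (abs_nonneg _) (by positivity)
    have hb2 : |u 0 * v 0| ≤ (2*c)⁻¹ * (2*(N:ℝ))⁻¹ := by
      rw [abs_mul]
      exact mul_le_mul (hub 0 ⟨le_refl (0:ℝ), hx0⟩) (hvb 0) (abs_nonneg _) (by positivity)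
    have habs : |I N| ≤ |u x * v x| + |u 0 * v 0| + |∫ t in (0:ℝ)..x, u' t * v t| := by
      rw [hIN]
      calc |u x * v x - u 0 * v 0 - ∫ t in (0:ℝ)..x, u' t * v t|
          ≤ |u x * v x - u 0 * v 0| + |∫ t in (0:ℝ)..x, u' t * v t| := abs_sub _ _
        _ ≤ |u x * v x| + |u 0 * v 0| + |∫ t in (0:ℝ)..x, u' t * v t| :=
            add_le_add_left (abs_sub _ _) _
    rw [Real.norm_eq_abs] at hint
    have hxabs : |x - (0:ℝ)| = x := by rw [sub_zero, abs_of_nonneg hx0]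
    rw [hxabs] at hint
    have hfin : (2*c)⁻¹ * (2*(N:ℝ))⁻¹ + (2*c)⁻¹ * (2*(N:ℝ))⁻¹
        + (2*(4*c^2)⁻¹ * (2*(N:ℝ))⁻¹) * x = C / N := by
      rw [hCdef]
      field_simp
    linarith
  -- conclusion
  have hIlim : Tendsto (fun N : ℕ => (-((-1:ℝ)^N)) * I N) atTop (𝓝 0) := by
    apply squeeze_zero_norm' ?_ (tendsto_const_div_atTop_nhds_zero_nat C)
    · filter_upwards [eventually_ge_atTop 1] with N hN
      have : ‖(-((-1:ℝ)^N)) * I N‖ = |I N| := by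
        rw [norm_mul, norm_neg, norm_pow, norm_neg, norm_one, one_pow, one_mul]
        rfl
      rw [this]
      exact hIbound N hN
  have := Sco_zero_tendsto.add hIlim
  rw [add_zero] at this
  have hfe : (fun N => Sco N 0 + (-((-1:ℝ)^N)) * I N) = fun N => Sco N x := by
    funext N
    rw [hrw N]
  rwa [hfe] at this

lemma tendsto_neg_shift {x : ℝ} (h : Tendsto (fun N => Sco N x) atTop (𝓝 (gfun x))) :
    Tendsto (fun N => Sco N (x + Real.pi)) atTop (𝓝 (gfun (x + Real.pi))) := by
  simp only [Sco_antiperiod, gfun_antiperiod]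
  exact h.neg

lemma tendsto_neg_unshift {x : ℝ} (h : Tendsto (fun N => Sco N x) atTop (𝓝 (gfun x))) :
    Tendsto (fun N => Sco N (x - Real.pi)) atTop (𝓝 (gfun (x - Real.pi))) := by
  have harg : x - Real.pi + Real.pi = x := by ring
  have e1 : ∀ N, Sco N (x - Real.pi) = -Sco N x := by
    intro N
    have h2 := Sco_antiperiod N (x - Real.pi)
    rw [harg] at h2
    linarith
  have e2 : gfun (x - Real.pi) = -gfun x := by
    have h2 := gfun_antiperiod (x - Real.pi)
    rw [harg] at h2
    linarith
  simp only [e1, e2]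
  exact h.neg

lemma tendsto_shift (x : ℝ) (h : Tendsto (fun N => Sco N x) atTop (𝓝 (gfun x))) (k : ℤ) :
    Tendsto (fun N => Sco N (x + (k:ℝ)*Real.pi)) atTop (𝓝 (gfun (x + (k:ℝ)*Real.pi))) := by
  induction k using Int.induction_on with
  | zero => simpa using h
  | succ i ih =>
    push_cast at ih ⊢
    have e : x + ((i:ℝ)+1)*Real.pi = (x + (i:ℝ)*Real.pi) + Real.pi := by ring
    rw [e]
    exact tendsto_neg_shift ih
  | pred i ih =>
    push_cast at ih ⊢
    have e : x + (-(i:ℝ)-1)*Real.pi = (x + (-(i:ℝ))*Real.pi) - Real.pi := by ring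
    have e2 : x + -(i:ℝ)*Real.pi = x + (-(i:ℝ))*Real.pi := by ring
    rw [e2] at ih
    rw [e]
    exact tendsto_neg_unshift ih

lemma Sco_pointwise (x : ℝ) : Tendsto (fun N => Sco N x) atTop (𝓝 (gfun x)) := by
  by_cases hc : Real.cos x = 0
  · have h0 : gfun x = 0 := by rw [gfun, hc, Real.sign_zero, mul_zero]
    have h1 : ∀ N, Sco N x = 0 := fun N => Sco_cos_zero N x hc
    rw [h0]
    simp only [h1]
    exact tendsto_const_nhds
  · have hpi := Real.pi_pos
    set k := round (x / Real.pi) with hk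
    set y := x - (k:ℝ)*Real.pi with hy
    have hxy : x = y + (k:ℝ)*Real.pi := by rw [hy]; ring
    have hy2 : |y| ≤ Real.pi/2 := by
      have h1 := abs_sub_round (x / Real.pi)
      have e : y = (x/Real.pi - (round (x/Real.pi) : ℤ)) * Real.pi := by
        rw [hy, hk]; field_simp
      rw [e, abs_mul, abs_of_pos hpi]
      calc |x/Real.pi - (round (x/Real.pi) : ℤ)| * Real.pi ≤ (1/2) * Real.pi :=
            mul_le_mul_of_nonneg_right h1 hpi.le
        _ = Real.pi/2 := by ring
    have hcy : Real.cos y ≠ 0 := by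
      intro h
      apply hc
      obtain ⟨m, hm⟩ := Real.cos_eq_zero_iff.mp h
      apply Real.cos_eq_zero_iff.mpr
      refine ⟨m + k, ?_⟩
      rw [hxy, hm]
      push_cast
      ring
    have hylt : |y| < Real.pi/2 := by
      rcases lt_or_eq_of_le hy2 with h | h
      · exact h
      · exfalso
        apply hcy
        have h2 : Real.cos |y| = 0 := by rw [h, Real.cos_pi_div_two]
        rwa [Real.cos_abs] at h2
    have hcore : Tendsto (fun N => Sco N y) atTop (𝓝 (gfun y)) := by
      have habs : Tendsto (fun N => Sco N |y|) atTop (𝓝 (-(Real.pi/4))) :=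
        Sco_core (abs_nonneg y) hylt
      have hres : Tendsto (fun N => Sco N y) atTop (𝓝 (-(Real.pi/4))) := by
        rcases abs_cases y with ⟨h, _⟩ | ⟨h, _⟩
        · rwa [h] at habs
        · rw [h] at habs
          simpa only [Sco_even] using habs
      have hmem := abs_lt.mp hylt
      have hgy : gfun y = -(Real.pi/4) := by
        have hpos : 0 < Real.cos y := Real.cos_pos_of_mem_Ioo ⟨hmem.1, hmem.2⟩
        rw [gfun, Real.sign_of_pos hpos]
        ring
      rw [hgy]
      exact hres
    have := tendsto_shift y hcore k
    rw [← hxy] at this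
    exact this

lemma gfun_bound (x : ℝ) : |gfun x| ≤ Real.pi/4 := by
  have hpi := Real.pi_pos
  rw [gfun, abs_mul, abs_neg]
  have h1 : |Real.sign (Real.cos x)| ≤ 1 := by
    rcases lt_trichotomy (Real.cos x) 0 with h | h | h
    · rw [Real.sign_of_neg h]; norm_num
    · rw [h, Real.sign_zero]; norm_num
    · rw [Real.sign_of_pos h]; norm_num
  have h2 : |Real.pi/4| = Real.pi/4 := abs_of_pos (by positivity)
  rw [h2]
  nlinarith

lemma Sco_continuous (N : ℕ) : Continuous (fun x => Sco N x) := by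
  unfold Sco
  apply continuous_finset_sum
  intro n _
  exact (continuous_const.mul
    (Real.continuous_cos.comp (continuous_const.mul continuous_id))).div_const _

lemma Sco_not_unif : ¬ TendstoUniformly (fun N x => Sco N x) gfun atTop := by
  intro H
  have hcont : Continuous gfun :=
    H.continuous (Frequently.of_forall fun N => Sco_continuous N)
  have hpi := Real.pi_pos
  have hg0 : gfun (Real.pi/2) = 0 := by
    rw [gfun, Real.cos_pi_div_two, Real.sign_zero, mul_zero]
  have hx : Tendsto (fun n : ℕ => Real.pi/2 - 1/((n:ℝ)+1)) atTop (𝓝 (Real.pi/2)) := by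
    have h1 := tendsto_one_div_add_atTop_nhds_zero_nat (𝕜 := ℝ)
    have h2 := (tendsto_const_nhds (x := Real.pi/2) (f := (atTop : Filter ℕ))).sub h1
    simpa using h2
  have hcomp : Tendsto (fun n : ℕ => gfun (Real.pi/2 - 1/((n:ℝ)+1))) atTop (𝓝 0) := by
    rw [← hg0]
    exact (hcont.tendsto _).comp hx
  have hval : ∀ n : ℕ, gfun (Real.pi/2 - 1/((n:ℝ)+1)) = -(Real.pi/4) := by
    intro n
    have h1 : 0 < 1/((n:ℝ)+1) := by positivity
    have h2 : 1/((n:ℝ)+1) ≤ 1 := by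
      rw [div_le_one (by positivity)]
      linarith [Nat.cast_nonneg (α := ℝ) n]
    have hcos : 0 < Real.cos (Real.pi/2 - 1/((n:ℝ)+1)) := by
      apply Real.cos_pos_of_mem_Ioo
      constructor
      · linarith [Real.pi_gt_three]
      · linarith
    rw [gfun, Real.sign_of_pos hcos]
    ring
  have hconst : Tendsto (fun n : ℕ => gfun (Real.pi/2 - 1/((n:ℝ)+1))) atTop (𝓝 (-(Real.pi/4))) := by
    simp only [hval]
    exact tendsto_const_nhds
  have := tendsto_nhds_unique hcomp hconst
  linarith


/-- The cosine series `∑_{n=1}^∞ (−1)^n cos((2n−1)x)/(2n−1)` converges at every `x ∈ ℝ` to a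
bounded sum function, yet its partial sums do not converge uniformly on `ℝ`. Hence
boundedness of the sum of a cosine series does not imply uniform convergence. -/
theorem bounded_cosine_series_not_uniformly_convergent :
    ∃ g : ℝ → ℝ,
      (∀ x : ℝ, Tendsto
        (fun N : ℕ => ∑ n ∈ Finset.Icc 1 N,
          (-1:ℝ)^n * Real.cos ((2*(n:ℝ)-1)*x) / (2*(n:ℝ)-1))
        atTop (nhds (g x))) ∧
      (∃ M : ℝ, ∀ x : ℝ, |g x| ≤ M) ∧
      ¬ TendstoUniformly
        (fun (N : ℕ) (x : ℝ) => ∑ n ∈ Finset.Icc 1 N,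
          (-1:ℝ)^n * Real.cos ((2*(n:ℝ)-1)*x) / (2*(n:ℝ)-1))
        g atTop := by
  exact ⟨gfun, fun x => Sco_pointwise x, ⟨Real.pi/4, fun x => gfun_bound x⟩, Sco_not_unif⟩
end
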